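/- For every formula φ0 of L_CSTIT, φ0 is satisfiable in BT+AC structures if and only if the translation tr'(φ0) = p_{φ0} ∧ ⋀_{ψ ∈ sf(φ0)} □B'_ψ, a formula of L_DSTIT, is satisfiable in BT+AC structures. -/

import Mathlib

/-! Common infrastructure for STIT logic (Chellas STIT, deliberative STIT,
historic necessity), following Balbiani, Herzig & Troquard,
"Alternative axiomatics and complexity of deliberative STIT theories". -/

namespace STIT

/-- Formulas of the (combined) STIT language, over a countable set of atoms
(indexed by `ℕ`) and agents indexed by `ℕ` (the actual agent set `Agt` is an
initial segment of `ℕ`).  `cstit i` is the Chellas STIT operator `[i]`,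
`dstit i` is the deliberative STIT operator `[i dstit: ·]`, and `box` is the
historic necessity operator `□`. -/
inductive Fml : Type
  | atm : ℕ → Fml
  | neg : Fml → Fml
  | and : Fml → Fml → Fml
  | cstit : ℕ → Fml → Fml
  | dstit : ℕ → Fml → Fml
  | box : Fml → Fml
  deriving DecidableEq

/-- Material implication `φ → ψ`, as the abbreviation `¬(φ ∧ ¬ψ)`. -/
def impF (φ ψ : Fml) : Fml := .neg (.and φ (.neg ψ))

/-- Disjunction `φ ∨ ψ`, as the abbreviation `¬(¬φ ∧ ¬ψ)`. -/
def orF (φ ψ : Fml) : Fml := .neg (.and (.neg φ) (.neg ψ))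

/-- Biimplication `φ ↔ ψ`, as the abbreviation `(φ → ψ) ∧ (ψ → φ)`. -/
def iffF (φ ψ : Fml) : Fml := .and (impF φ ψ) (impF ψ φ)

/-- `◇φ`, abbreviating `¬□¬φ`. -/
def diaF (φ : Fml) : Fml := .neg (.box (.neg φ))

/-- `⟨i⟩φ`, abbreviating `¬[i]¬φ`. -/
def posF (i : ℕ) (φ : Fml) : Fml := .neg (.cstit i (.neg φ))

/-- Conjunction of a (finite) list of formulas; the empty conjunction is a
tautology `⊤`. -/
def conjF : List Fml → Fml
  | [] => impF (.atm 0) (.atm 0)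
  | [φ] => φ
  | φ :: l => .and φ (conjF l)

/-- The length `‖φ‖` of a formula. -/
def len : Fml → ℕ
  | .atm _ => 1
  | .neg φ => 1 + len φ
  | .and φ ψ => 3 + len φ + len ψ
  | .cstit _ φ => 3 + len φ
  | .dstit _ φ => 5 + len φ
  | .box φ => 1 + len φ

/-- The set `sf φ` of subformulas of `φ`. -/
def sf : Fml → Finset Fml
  | .atm p => {.atm p}
  | .neg φ => insert (.neg φ) (sf φ)
  | .and φ ψ => insert (.and φ ψ) (sf φ ∪ sf ψ)
  | .cstit i φ => insert (.cstit i φ) (sf φ)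
  | .dstit i φ => insert (.dstit i φ) (sf φ)
  | .box φ => insert (.box φ) (sf φ)

/-- The set of atoms occurring in a formula. -/
def atoms : Fml → Finset ℕ
  | .atm p => {p}
  | .neg φ => atoms φ
  | .and φ ψ => atoms φ ∪ atoms ψ
  | .cstit _ φ => atoms φ
  | .dstit _ φ => atoms φ
  | .box φ => atoms φ

/-- `φ` contains no deliberative STIT operator (so `φ` belongs to `L_CSTIT`
when it moreover only uses box/cstit). -/
def NoDstit : Fml → Prop
  | .atm _ => True
  | .neg φ => NoDstit φ
  | .and φ ψ => NoDstit φ ∧ NoDstit ψ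
  | .cstit _ φ => NoDstit φ
  | .dstit _ _ => False
  | .box φ => NoDstit φ

/-- `φ` contains no Chellas STIT operator (so `φ` belongs to `L_DSTIT`). -/
def NoCstit : Fml → Prop
  | .atm _ => True
  | .neg φ => NoCstit φ
  | .and φ ψ => NoCstit φ ∧ NoCstit ψ
  | .cstit _ _ => False
  | .dstit _ φ => NoCstit φ
  | .box φ => NoCstit φ

/-- `φ` contains no historic necessity operator. -/
def NoBox : Fml → Prop
  | .atm _ => True
  | .neg φ => NoBox φ
  | .and φ ψ => NoBox φ ∧ NoBox ψ
  | .cstit _ φ => NoBox φ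
  | .dstit _ φ => NoBox φ
  | .box _ => False

/-- All agents occurring in `φ` belong to `A`. -/
def AgentsIn (A : Set ℕ) : Fml → Prop
  | .atm _ => True
  | .neg φ => AgentsIn A φ
  | .and φ ψ => AgentsIn A φ ∧ AgentsIn A ψ
  | .cstit i φ => i ∈ A ∧ AgentsIn A φ
  | .dstit i φ => i ∈ A ∧ AgentsIn A φ
  | .box φ => AgentsIn A φ

/-- `A` is an initial segment `{0, 1, …}` of `ℕ`. -/
def InitSeg (A : Set ℕ) : Prop := ∀ i ∈ A, ∀ j : ℕ, j ≤ i → j ∈ A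

/-- A BT+AC model over the agent set `Agt`: a nonempty tree-like strict
order of moments, together with a choice function and a valuation.
Histories are represented as maximal chains (maximal linearly `<`-ordered
subsets) of moments; `Choice i w` is, for each agent `i ∈ Agt`, a partition
of the set `H_w` of histories passing through `w` into nonempty cells,
satisfying the superadditivity constraint (independence of agents). -/
structure BTAC (Agt : Set ℕ) where
  W : Type
  neW : Nonempty W
  lt : W → W → Prop
  lt_irrefl : ∀ w : W, ¬ lt w w
  lt_trans : ∀ {a b c : W}, lt a b → lt b c → lt a c
  treelike : ∀ w₁ w₂ w₃ : W, lt w₁ w₃ → lt w₂ w₃ → w₁ = w₂ ∨ lt w₁ w₂ ∨ lt w₂ w₁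
  Choice : ℕ → W → Set (Set (Set W))
  V : ℕ → W → Set W → Prop
  choice_hist : ∀ i ∈ Agt, ∀ w : W, ∀ Q ∈ Choice i w, ∀ h ∈ Q,
      IsMaxChain lt h ∧ w ∈ h
  choice_cell_nonempty : ∀ i ∈ Agt, ∀ w : W, ∀ Q ∈ Choice i w, Q.Nonempty
  choice_nonempty : ∀ i ∈ Agt, ∀ w : W, (Choice i w).Nonempty
  choice_cover : ∀ i ∈ Agt, ∀ w : W, ∀ h : Set W,
      IsMaxChain lt h → w ∈ h → ∃ Q ∈ Choice i w, h ∈ Q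
  choice_disjoint : ∀ i ∈ Agt, ∀ w : W, ∀ Q ∈ Choice i w, ∀ Q' ∈ Choice i w,
      (Q ∩ Q').Nonempty → Q = Q'
  superadd : ∀ w : W, ∀ s : ℕ → Set (Set W),
      (∀ i ∈ Agt, s i ∈ Choice i w) → (⋂ i ∈ Agt, s i).Nonempty

/-- Truth of a formula at an index `w/h` of a BT+AC model.  (`[i]φ` holds at
`w/h` iff `φ` holds at `w/h'` for every history `h'` in the cell of
`Choice i w` containing `h`; `□φ` holds at `w/h` iff `φ` holds at `w/h'` for
every history `h'` through `w`; `[i dstit: φ]` additionally requires a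
witness history through `w` where `φ` fails.) -/
def truth {Agt : Set ℕ} (M : BTAC Agt) : Fml → M.W → Set M.W → Prop
  | .atm p, w, h => M.V p w h
  | .neg φ, w, h => ¬ truth M φ w h
  | .and φ ψ, w, h => truth M φ w h ∧ truth M ψ w h
  | .cstit i φ, w, h =>
      ∀ h' : Set M.W, (∃ Q ∈ M.Choice i w, h ∈ Q ∧ h' ∈ Q) → truth M φ w h'
  | .dstit i φ, w, h =>
      (∀ h' : Set M.W, (∃ Q ∈ M.Choice i w, h ∈ Q ∧ h' ∈ Q) → truth M φ w h') ∧
      (∃ h'' : Set M.W, IsMaxChain M.lt h'' ∧ w ∈ h'' ∧ ¬ truth M φ w h'')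
  | .box φ, w, h =>
      ∀ h' : Set M.W, IsMaxChain M.lt h' → w ∈ h' → truth M φ w h'

/-- Validity in BT+AC structures over the agent set `Agt`: truth at every
index `w/h` (with `h` a history and `w ∈ h`) of every BT+AC model. -/
def validBTAC (Agt : Set ℕ) (φ : Fml) : Prop :=
  ∀ M : BTAC Agt, ∀ w : M.W, ∀ h : Set M.W,
    IsMaxChain M.lt h → w ∈ h → truth M φ w h

/-- Satisfiability in BT+AC structures over the agent set `Agt`. -/
def satBTAC (Agt : Set ℕ) (φ : Fml) : Prop :=
  ∃ M : BTAC Agt, ∃ w : M.W, ∃ h : Set M.W,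
    IsMaxChain M.lt h ∧ w ∈ h ∧ truth M φ w h

/-- A Kripke model over the agent set `Agt`: a nonempty set of worlds, an
equivalence relation `R i` for each agent `i ∈ Agt`, and a valuation. -/
structure KModel (Agt : Set ℕ) where
  W : Type
  neW : Nonempty W
  R : ℕ → W → W → Prop
  equiv : ∀ i ∈ Agt, Equivalence (R i)
  V : ℕ → Set W

/-- The general permutation property: for all worlds `w, v` and agents
`l, m, n ∈ Agt`, if `⟨w,v⟩ ∈ R_l ∘ R_m` then there is `u` with `⟨w,u⟩ ∈ R_n`
and `⟨u,v⟩ ∈ R_i` for every agent `i ≠ n`. -/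
def GenPerm {Agt : Set ℕ} (M : KModel Agt) : Prop :=
  ∀ w v : M.W, ∀ l ∈ Agt, ∀ m ∈ Agt, ∀ n ∈ Agt,
    Relation.Comp (M.R l) (M.R m) w v →
    ∃ u : M.W, M.R n w u ∧ ∀ i ∈ Agt, i ≠ n → M.R i u v

/-- Truth in a Kripke model: `[i]` is interpreted by `R i`, and `□` by the
composition `R 1 ∘ R 0` (so that `Def(□)` holds). -/
def ktruth {Agt : Set ℕ} (M : KModel Agt) : Fml → M.W → Prop
  | .atm p, w => w ∈ M.V p
  | .neg φ, w => ¬ ktruth M φ w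
  | .and φ ψ, w => ktruth M φ w ∧ ktruth M ψ w
  | .cstit i φ, w => ∀ u : M.W, M.R i w u → ktruth M φ u
  | .dstit i φ, w =>
      (∀ u : M.W, M.R i w u → ktruth M φ u) ∧
      (∃ u : M.W, Relation.Comp (M.R 1) (M.R 0) w u ∧ ¬ ktruth M φ u)
  | .box φ, w => ∀ u : M.W, Relation.Comp (M.R 1) (M.R 0) w u → ktruth M φ u

/-- Validity in all Kripke models over `Agt` (with equivalence relations)
satisfying the general permutation property. -/
def validK (Agt : Set ℕ) (φ : Fml) : Prop :=
  ∀ M : KModel Agt, GenPerm M → ∀ w : M.W, ktruth M φ w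

/-- Satisfiability in some Kripke model over `Agt` (with equivalence
relations) satisfying the general permutation property. -/
def satK (Agt : Set ℕ) (φ : Fml) : Prop :=
  ∃ M : KModel Agt, GenPerm M ∧ ∃ w : M.W, ktruth M φ w

/-- `φ` is (a substitution instance of) a propositional tautology: it is true
under every assignment of truth values to formulas that respects `¬` and `∧`. -/
def Taut (φ : Fml) : Prop :=
  ∀ v : Fml → Prop,
    (∀ ψ : Fml, v (.neg ψ) ↔ ¬ v ψ) →
    (∀ ψ χ : Fml, v (.and ψ χ) ↔ (v ψ ∧ v χ)) →
    v φ

/-- The S5 axiom schemas (K, T and 5) for a box-like operator `op`. -/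
def s5Set (op : Fml → Fml) : Set Fml :=
  {χ | (∃ φ ψ : Fml, χ = impF (op (impF φ ψ)) (impF (op φ) (op ψ))) ∨
       (∃ φ : Fml, χ = impF (op φ) φ) ∨
       (∃ φ : Fml, χ = impF (.neg (op (.neg φ))) (op (.neg (op (.neg φ)))))}

/-- The schemas `(Incl_i) : □φ → [i]φ` for each agent `i ∈ Agt`. -/
def inclSet (Agt : Set ℕ) : Set Fml :=
  {χ | ∃ i ∈ Agt, ∃ φ : Fml, χ = impF (.box φ) (.cstit i φ)}

/-- The formula `(AAIA_k) : ◇φ → ⟨k⟩⋀_{0 ≤ i < k}⟨i⟩φ`. -/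
def aaiaFml (k : ℕ) (φ : Fml) : Fml :=
  impF (diaF φ) (posF k (conjF ((List.range k).map (fun i => posF i φ))))

/-- The alternative independence schemas `(AAIA_k)` for all `k ≥ 1` with
agents `0, …, k ∈ Agt`. -/
def aaiaSet (Agt : Set ℕ) : Set Fml :=
  {χ | ∃ k : ℕ, 1 ≤ k ∧ (∀ i ≤ k, i ∈ Agt) ∧ ∃ φ : Fml, χ = aaiaFml k φ}

/-- The formula `(AIA_k) : (◇[0]φ₀ ∧ … ∧ ◇[k]φₖ) → ◇([0]φ₀ ∧ … ∧ [k]φₖ)`. -/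
def aiaFml (k : ℕ) (φs : ℕ → Fml) : Fml :=
  impF (conjF ((List.range (k+1)).map (fun i => diaF (.cstit i (φs i)))))
       (diaF (conjF ((List.range (k+1)).map (fun i => .cstit i (φs i)))))

/-- The formula `(GPerm_k) : ⟨l⟩⟨m⟩φ → ⟨n⟩⋀_{i ≤ k, i ≠ n}⟨i⟩φ`. -/
def gpermFml (k l m n : ℕ) (φ : Fml) : Fml :=
  impF (posF l (posF m φ))
       (posF n (conjF (((List.range (k+1)).filter (fun i => i != n)).map
          (fun i => posF i φ))))

/-- The general permutation schemas `(GPerm_k)` for all `k ≥ 0` (with agents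
`0, …, k ∈ Agt`) and agents `l, m, n ∈ Agt`. -/
def gpermSet (Agt : Set ℕ) : Set Fml :=
  {χ | ∃ k : ℕ, (∀ i ≤ k, i ∈ Agt) ∧
       ∃ l ∈ Agt, ∃ m ∈ Agt, ∃ n ∈ Agt, ∃ φ : Fml, χ = gpermFml k l m n φ}

/-- The definition schema `Def(□) : □φ ↔ [1][0]φ`. -/
def defBoxSet : Set Fml :=
  {χ | ∃ φ : Fml, χ = iffF (.box φ) (.cstit 1 (.cstit 0 φ))}

/-- The alternative axiomatics of Section 3: `S5(□)`, `S5(i)` for each agent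
`i ∈ Agt`, `(Incl_i)` and `(AAIA_k)`. -/
def xuAltAx (Agt : Set ℕ) : Set Fml :=
  s5Set Fml.box ∪ (⋃ i ∈ Agt, s5Set (fun φ => Fml.cstit i φ)) ∪
    inclSet Agt ∪ aaiaSet Agt

/-- The axiomatics of Section 4: `S5(i)` for each agent `i ∈ Agt`, `Def(□)`
and `(GPerm_k)`. -/
def gpermAx (Agt : Set ℕ) : Set Fml :=
  (⋃ i ∈ Agt, s5Set (fun φ => Fml.cstit i φ)) ∪ defBoxSet ∪ gpermSet Agt

/-- Hilbert-style provability from the axiom set `Ax` (together with all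
propositional tautologies) by modus ponens and `□`-necessitation. -/
inductive ProvB (Ax : Set Fml) : Fml → Prop
  | taut {φ : Fml} : Taut φ → ProvB Ax φ
  | axm {φ : Fml} : φ ∈ Ax → ProvB Ax φ
  | mp {φ ψ : Fml} : ProvB Ax (impF φ ψ) → ProvB Ax φ → ProvB Ax ψ
  | nec {φ : Fml} : ProvB Ax φ → ProvB Ax (.box φ)

/-- Hilbert-style provability from the axiom set `Ax` (together with all
propositional tautologies) by modus ponens and `[i]`-necessitation for each
agent `i ∈ Agt`. -/
inductive ProvC (Agt : Set ℕ) (Ax : Set Fml) : Fml → Prop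
  | taut {φ : Fml} : Taut φ → ProvC Agt Ax φ
  | axm {φ : Fml} : φ ∈ Ax → ProvC Agt Ax φ
  | mp {φ ψ : Fml} : ProvC Agt Ax (impF φ ψ) → ProvC Agt Ax φ → ProvC Agt Ax ψ
  | nec {i : ℕ} {φ : Fml} : i ∈ Agt → ProvC Agt Ax φ → ProvC Agt Ax (.cstit i φ)

/-- The biimplication `B_ψ` relating the fresh atom `p_ψ` (given by `pA ψ`)
with `ψ`, used in the translation `tr` from `L_DSTIT` to `L_CSTIT`:
`B_{[i dstit: φ]} = (p_{[i dstit: φ]} ↔ [i]p_φ ∧ ¬□p_φ)`. -/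
def Beq (pA : Fml → ℕ) : Fml → Fml
  | .atm q => iffF (.atm (pA (.atm q))) (.atm q)
  | .neg φ => iffF (.atm (pA (.neg φ))) (.neg (.atm (pA φ)))
  | .and φ ψ => iffF (.atm (pA (.and φ ψ))) (.and (.atm (pA φ)) (.atm (pA ψ)))
  | .cstit i φ => iffF (.atm (pA (.cstit i φ))) (.cstit i (.atm (pA φ)))
  | .dstit i φ => iffF (.atm (pA (.dstit i φ)))
      (.and (.cstit i (.atm (pA φ))) (.neg (.box (.atm (pA φ)))))
  | .box φ => iffF (.atm (pA (.box φ))) (.box (.atm (pA φ)))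

/-- The biimplication `B'_ψ` used in the translation `tr'` from `L_CSTIT` to
`L_DSTIT`: `B'_{[i]φ} = (p_{[i]φ} ↔ [i dstit: p_φ] ∨ □p_φ)`. -/
def Beq' (pA : Fml → ℕ) : Fml → Fml
  | .atm q => iffF (.atm (pA (.atm q))) (.atm q)
  | .neg φ => iffF (.atm (pA (.neg φ))) (.neg (.atm (pA φ)))
  | .and φ ψ => iffF (.atm (pA (.and φ ψ))) (.and (.atm (pA φ)) (.atm (pA ψ)))
  | .cstit i φ => iffF (.atm (pA (.cstit i φ)))
      (orF (.dstit i (.atm (pA φ))) (.box (.atm (pA φ))))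
  | .dstit i φ => iffF (.atm (pA (.dstit i φ))) (.dstit i (.atm (pA φ)))
  | .box φ => iffF (.atm (pA (.box φ))) (.box (.atm (pA φ)))

/-- The translation `tr(φ₀) = p_{φ₀} ∧ ⋀_{ψ ∈ sf(φ₀)} □B_ψ`. -/
noncomputable def tr (pA : Fml → ℕ) (φ0 : Fml) : Fml :=
  .and (.atm (pA φ0)) (conjF ((sf φ0).toList.map (fun ψ => .box (Beq pA ψ))))

/-- The translation `tr'(φ₀) = p_{φ₀} ∧ ⋀_{ψ ∈ sf(φ₀)} □B'_ψ`. -/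
noncomputable def tr' (pA : Fml → ℕ) (φ0 : Fml) : Fml :=
  .and (.atm (pA φ0)) (conjF ((sf φ0).toList.map (fun ψ => .box (Beq' pA ψ))))

/-- The atoms `p_ψ = pA ψ` for `ψ ∈ sf φ₀` are pairwise distinct and fresh
(none occurs in `φ₀`). -/
def Fresh (pA : Fml → ℕ) (φ0 : Fml) : Prop :=
  Set.InjOn pA ↑(sf φ0) ∧ ∀ ψ ∈ sf φ0, pA ψ ∉ atoms φ0


/-! ### Auxiliary lemmas -/

lemma sf_self : ∀ φ : Fml, φ ∈ sf φ := by
  intro φ; cases φ <;> simp [sf]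

lemma sf_sub : ∀ φ ψ : Fml, ψ ∈ sf φ → sf ψ ⊆ sf φ := by
  intro φ
  induction φ with
  | atm p =>
      intro ψ hψ
      simp only [sf, Finset.mem_singleton] at hψ
      subst hψ; exact subset_rfl
  | neg φ ih =>
      intro ψ hψ
      rw [show sf (.neg φ) = insert (.neg φ) (sf φ) from rfl, Finset.mem_insert] at hψ
      rcases hψ with rfl | hψ
      · exact subset_rfl
      · exact (ih ψ hψ).trans (Finset.subset_insert _ _)
  | and φ χ ih1 ih2 =>
      intro ψ hψ
      rw [show sf (.and φ χ) = insert (.and φ χ) (sf φ ∪ sf χ) from rfl,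
        Finset.mem_insert, Finset.mem_union] at hψ
      rcases hψ with rfl | hψ | hψ
      · exact subset_rfl
      · exact (ih1 ψ hψ).trans (Finset.subset_union_left.trans (Finset.subset_insert _ _))
      · exact (ih2 ψ hψ).trans (Finset.subset_union_right.trans (Finset.subset_insert _ _))
  | cstit i φ ih =>
      intro ψ hψ
      rw [show sf (.cstit i φ) = insert (.cstit i φ) (sf φ) from rfl, Finset.mem_insert] at hψ
      rcases hψ with rfl | hψ
      · exact subset_rfl
      · exact (ih ψ hψ).trans (Finset.subset_insert _ _)
  | dstit i φ ih =>
      intro ψ hψ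
      rw [show sf (.dstit i φ) = insert (.dstit i φ) (sf φ) from rfl, Finset.mem_insert] at hψ
      rcases hψ with rfl | hψ
      · exact subset_rfl
      · exact (ih ψ hψ).trans (Finset.subset_insert _ _)
  | box φ ih =>
      intro ψ hψ
      rw [show sf (.box φ) = insert (.box φ) (sf φ) from rfl, Finset.mem_insert] at hψ
      rcases hψ with rfl | hψ
      · exact subset_rfl
      · exact (ih ψ hψ).trans (Finset.subset_insert _ _)

lemma mem_sf_neg {φ0 φ : Fml} (h : Fml.neg φ ∈ sf φ0) : φ ∈ sf φ0 :=
  sf_sub φ0 _ h (by simp [sf, sf_self])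

lemma mem_sf_and_left {φ0 φ χ : Fml} (h : Fml.and φ χ ∈ sf φ0) : φ ∈ sf φ0 :=
  sf_sub φ0 _ h (by simp [sf, sf_self])

lemma mem_sf_and_right {φ0 φ χ : Fml} (h : Fml.and φ χ ∈ sf φ0) : χ ∈ sf φ0 :=
  sf_sub φ0 _ h (by simp [sf, sf_self])

lemma mem_sf_cstit {φ0 φ : Fml} {i : ℕ} (h : Fml.cstit i φ ∈ sf φ0) : φ ∈ sf φ0 :=
  sf_sub φ0 _ h (by simp [sf, sf_self])

lemma mem_sf_box {φ0 φ : Fml} (h : Fml.box φ ∈ sf φ0) : φ ∈ sf φ0 :=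
  sf_sub φ0 _ h (by simp [sf, sf_self])

lemma atm_mem_sf : ∀ (φ0 : Fml) (q : ℕ), Fml.atm q ∈ sf φ0 → q ∈ atoms φ0 := by
  intro φ0
  induction φ0 with
  | atm p => intro q h; simp [sf] at h; simp [h, atoms]
  | neg φ ih => intro q h; simp [sf] at h; simpa [atoms] using ih q h
  | and φ χ ih1 ih2 =>
      intro q h; simp [sf] at h
      rcases h with h | h
      · simp [atoms, ih1 q h]
      · simp [atoms, ih2 q h]
  | cstit i φ ih => intro q h; simp [sf] at h; simpa [atoms] using ih q h
  | dstit i φ ih => intro q h; simp [sf] at h; simpa [atoms] using ih q h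
  | box φ ih => intro q h; simp [sf] at h; simpa [atoms] using ih q h

lemma noDstit_sf : ∀ (φ0 : Fml), NoDstit φ0 → ∀ ψ ∈ sf φ0, NoDstit ψ := by
  intro φ0
  induction φ0 with
  | atm p => intro _ ψ h; simp [sf] at h; subst h; trivial
  | neg φ ih =>
      intro hnd ψ h; simp [sf] at h
      rcases h with rfl | h
      · exact hnd
      · exact ih hnd ψ h
  | and φ χ ih1 ih2 =>
      intro hnd ψ h; simp [sf] at h
      rcases h with rfl | h | h
      · exact hnd
      · exact ih1 hnd.1 ψ h
      · exact ih2 hnd.2 ψ h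
  | cstit i φ ih =>
      intro hnd ψ h; simp [sf] at h
      rcases h with rfl | h
      · exact hnd
      · exact ih hnd ψ h
  | dstit i φ ih => intro hnd; exact absurd hnd (by simp [NoDstit])
  | box φ ih =>
      intro hnd ψ h; simp [sf] at h
      rcases h with rfl | h
      · exact hnd
      · exact ih hnd ψ h

lemma agentsIn_sf {A : Set ℕ} : ∀ (φ0 : Fml), AgentsIn A φ0 → ∀ ψ ∈ sf φ0, AgentsIn A ψ := by
  intro φ0
  induction φ0 with
  | atm p => intro _ ψ h; simp [sf] at h; subst h; trivial
  | neg φ ih =>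
      intro ha ψ h; simp [sf] at h
      rcases h with rfl | h
      · exact ha
      · exact ih ha ψ h
  | and φ χ ih1 ih2 =>
      intro ha ψ h; simp [sf] at h
      rcases h with rfl | h | h
      · exact ha
      · exact ih1 ha.1 ψ h
      · exact ih2 ha.2 ψ h
  | cstit i φ ih =>
      intro ha ψ h; simp [sf] at h
      rcases h with rfl | h
      · exact ha
      · exact ih ha.2 ψ h
  | dstit i φ ih =>
      intro ha ψ h; simp [sf] at h
      rcases h with rfl | h
      · exact ha
      · exact ih ha.2 ψ h
  | box φ ih =>
      intro ha ψ h; simp [sf] at h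
      rcases h with rfl | h
      · exact ha
      · exact ih ha ψ h

lemma truth_orF {Agt : Set ℕ} (M : BTAC Agt) (a b : Fml) (w : M.W) (h : Set M.W) :
    truth M (orF a b) w h ↔ (truth M a w h ∨ truth M b w h) := by
  simp only [orF, truth]; tauto

lemma truth_iffF {Agt : Set ℕ} (M : BTAC Agt) (a b : Fml) (w : M.W) (h : Set M.W) :
    truth M (iffF a b) w h ↔ (truth M a w h ↔ truth M b w h) := by
  simp only [iffF, impF, truth]; tauto

lemma truth_conjF {Agt : Set ℕ} (M : BTAC Agt) :
    ∀ (l : List Fml) (w : M.W) (h : Set M.W),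
      truth M (conjF l) w h ↔ ∀ φ ∈ l, truth M φ w h
  | [], w, h => by simp only [conjF, impF, truth]; simp
  | [φ], w, h => by simp [conjF]
  | φ :: ψ :: l, w, h => by
      have := truth_conjF M (ψ :: l) w h
      simp only [conjF, truth] at this ⊢
      simp_all

/-- Semantic equivalence `[i]χ ↔ ([i dstit: χ] ∨ □χ)` at every index. -/
lemma cstit_iff_dstit_or_box {Agt : Set ℕ} (M : BTAC Agt) (i : ℕ) (hi : i ∈ Agt)
    (χ : Fml) (w : M.W) (h : Set M.W) :
    truth M (.cstit i χ) w h ↔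
      (truth M (.dstit i χ) w h ∨ truth M (.box χ) w h) := by
  constructor
  · intro hc
    by_cases hb : truth M (.box χ) w h
    · exact Or.inr hb
    · left
      refine ⟨hc, ?_⟩
      simp only [truth] at hb
      push_neg at hb
      exact hb
  · rintro (hd | hb)
    · exact hd.1
    · rintro h' ⟨Q, hQ, _, hh'Q⟩
      obtain ⟨hm', hw'⟩ := M.choice_hist i hi w Q hQ h' hh'Q
      exact hb h' hm' hw'

open Classical in
/-- The model `M'` obtained by reinterpreting each fresh atom `p_ψ`
(`ψ ∈ sf φ0`) as the truth of `ψ` in `M`. -/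
noncomputable def reval {Agt : Set ℕ} (M : BTAC Agt) (pA : Fml → ℕ) (φ0 : Fml) :
    BTAC Agt :=
  { M with V := fun q w h =>
      if hq : ∃ ψ, ψ ∈ sf φ0 ∧ pA ψ = q then truth M hq.choose w h else M.V q w h }

lemma reval_V_pA {Agt : Set ℕ} (M : BTAC Agt) {pA : Fml → ℕ} {φ0 : Fml}
    (hinj : Set.InjOn pA ↑(sf φ0)) {ψ : Fml} (hψ : ψ ∈ sf φ0)
    (w : M.W) (h : Set M.W) :
    (reval M pA φ0).V (pA ψ) w h ↔ truth M ψ w h := by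
  have hq : ∃ ψ', ψ' ∈ sf φ0 ∧ pA ψ' = pA ψ := ⟨ψ, hψ, rfl⟩
  have hch : hq.choose = ψ := hinj (by exact_mod_cast hq.choose_spec.1) hψ hq.choose_spec.2
  simp only [reval, dif_pos hq, hch]

lemma reval_V_other {Agt : Set ℕ} (M : BTAC Agt) {pA : Fml → ℕ} {φ0 : Fml}
    {q : ℕ} (hq : ¬ ∃ ψ, ψ ∈ sf φ0 ∧ pA ψ = q) (w : M.W) (h : Set M.W) :
    (reval M pA φ0).V q w h ↔ M.V q w h := by
  simp only [reval, dif_neg hq]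

/-- For every formula `φ₀` of `L_CSTIT`, `φ₀` is satisfiable in
BT+AC structures iff the translation
`tr'(φ₀) = p_{φ₀} ∧ ⋀_{ψ ∈ sf(φ₀)} □B'_ψ`, a formula of `L_DSTIT`, is
satisfiable in BT+AC structures. -/
theorem cstit_sat_iff_tr'_sat (Agt : Set ℕ) (hAgt : InitSeg Agt)
    (φ0 : Fml) (hφ0 : NoDstit φ0) (hφ0A : AgentsIn Agt φ0)
    (pA : Fml → ℕ) (hfresh : Fresh pA φ0) :
    satBTAC Agt φ0 ↔ satBTAC Agt (tr' pA φ0) := by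
  obtain ⟨hinj, hfr⟩ := hfresh
  constructor
  · -- forward direction: reinterpret the fresh atoms
    rintro ⟨M, w0, h0, hmax, hw0, hφ⟩
    set M' := reval M pA φ0 with hM'
    have ha : ∀ ψ, ψ ∈ sf φ0 → ∀ (w : M.W) (h : Set M.W),
        M'.V (pA ψ) w h ↔ truth M ψ w h := fun ψ hψ w h => reval_V_pA M hinj hψ w h
    have hother : ∀ q ∈ atoms φ0, ∀ (w : M.W) (h : Set M.W),
        M'.V q w h ↔ M.V q w h := by
      intro q hq w h
      refine reval_V_other M ?_ w h
      rintro ⟨ψ, hψ, rfl⟩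
      exact hfr ψ hψ hq
    have hBeq : ∀ ψ ∈ sf φ0, ∀ (w : M.W) (h : Set M.W),
        truth M' (Beq' pA ψ) w h := by
      intro ψ hψ w h
      cases ψ with
      | atm q =>
          rw [Beq', truth_iffF M' _ _ w h]
          have hq : q ∈ atoms φ0 := atm_mem_sf φ0 q hψ
          show M'.V (pA (.atm q)) w h ↔ M'.V q w h
          rw [ha _ hψ w h, hother q hq w h]
          exact Iff.rfl
      | neg φ =>
          rw [Beq', truth_iffF M' _ _ w h]
          have hφm : φ ∈ sf φ0 := mem_sf_neg hψ
          show M'.V (pA (.neg φ)) w h ↔ ¬ M'.V (pA φ) w h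
          rw [ha _ hψ w h, ha _ hφm w h]
          exact Iff.rfl
      | and φ χ =>
          rw [Beq', truth_iffF M' _ _ w h]
          have hφm : φ ∈ sf φ0 := mem_sf_and_left hψ
          have hχm : χ ∈ sf φ0 := mem_sf_and_right hψ
          show M'.V (pA (.and φ χ)) w h ↔ (M'.V (pA φ) w h ∧ M'.V (pA χ) w h)
          rw [ha _ hψ w h, ha _ hφm w h, ha _ hχm w h]
          exact Iff.rfl
      | cstit i φ =>
          rw [Beq', truth_iffF M' _ _ w h, truth_orF M' _ _ w h]
          have hφm : φ ∈ sf φ0 := mem_sf_cstit hψ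
          have hi : i ∈ Agt := (agentsIn_sf φ0 hφ0A _ hψ).1
          rw [← cstit_iff_dstit_or_box M' i hi (.atm (pA φ)) w h]
          show M'.V (pA (.cstit i φ)) w h ↔ truth M' (.cstit i (.atm (pA φ))) w h
          rw [ha _ hψ w h]
          simp only [truth]
          constructor
          · intro H h' hh'
            exact (ha _ hφm w h').2 (H h' hh')
          · intro H h' hh'
            exact (ha _ hφm w h').1 (H h' hh')
      | dstit i φ =>
          exact absurd (noDstit_sf φ0 hφ0 _ hψ) (by simp [NoDstit])
      | box φ =>
          rw [Beq', truth_iffF M' _ _ w h]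
          have hφm : φ ∈ sf φ0 := mem_sf_box hψ
          show M'.V (pA (.box φ)) w h ↔ truth M' (.box (.atm (pA φ))) w h
          rw [ha _ hψ w h]
          simp only [truth]
          constructor
          · intro H h' hm' hw'
            exact (ha _ hφm w h').2 (H h' hm' hw')
          · intro H h' hm' hw'
            exact (ha _ hφm w h').1 (H h' hm' hw')
    refine ⟨M', w0, h0, hmax, hw0, ?_, (truth_conjF M' _ w0 h0).2 ?_⟩
    · exact (ha φ0 (sf_self φ0) w0 h0).2 hφ
    · intro χ hχ
      simp only [List.mem_map] at hχ
      obtain ⟨ψ, hψ, rfl⟩ := hχ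
      rw [Finset.mem_toList] at hψ
      intro h' _ _
      exact hBeq ψ hψ w0 h'
  · -- backward direction: the same model satisfies φ0
    rintro ⟨M, w0, h0, hmax, hw0, htr⟩
    have htr1 : M.V (pA φ0) w0 h0 := htr.1
    have hB : ∀ ψ ∈ sf φ0, ∀ (h : Set M.W), IsMaxChain M.lt h → w0 ∈ h →
        truth M (Beq' pA ψ) w0 h := by
      intro ψ hψ h hm hw
      have hmem : Fml.box (Beq' pA ψ) ∈ (sf φ0).toList.map (fun ψ => .box (Beq' pA ψ)) :=
        List.mem_map.2 ⟨ψ, Finset.mem_toList.2 hψ, rfl⟩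
      exact (truth_conjF M _ w0 h0).1 htr.2 _ hmem h hm hw
    have main : ∀ ψ, ψ ∈ sf φ0 → ∀ (h : Set M.W), IsMaxChain M.lt h → w0 ∈ h →
        (truth M ψ w0 h ↔ M.V (pA ψ) w0 h) := by
      intro ψ
      induction ψ with
      | atm q =>
          intro hψ h hm hw
          have hb := hB _ hψ h hm hw
          rw [Beq', truth_iffF] at hb
          exact hb.symm
      | neg φ ih =>
          intro hψ h hm hw
          have hφm : φ ∈ sf φ0 := mem_sf_neg hψ
          have hb := hB _ hψ h hm hw
          rw [Beq', truth_iffF] at hb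
          have hb' : M.V (pA (.neg φ)) w0 h ↔ ¬ M.V (pA φ) w0 h := hb
          show (¬ truth M φ w0 h) ↔ _
          rw [ih hφm h hm hw, hb']
      | and φ χ ih1 ih2 =>
          intro hψ h hm hw
          have hφm : φ ∈ sf φ0 := mem_sf_and_left hψ
          have hχm : χ ∈ sf φ0 := mem_sf_and_right hψ
          have hb := hB _ hψ h hm hw
          rw [Beq', truth_iffF] at hb
          have hb' : M.V (pA (.and φ χ)) w0 h ↔
              (M.V (pA φ) w0 h ∧ M.V (pA χ) w0 h) := hb
          show (truth M φ w0 h ∧ truth M χ w0 h) ↔ _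
          rw [ih1 hφm h hm hw, ih2 hχm h hm hw, hb']
      | cstit i φ ih =>
          intro hψ h hm hw
          have hφm : φ ∈ sf φ0 := mem_sf_cstit hψ
          have hi : i ∈ Agt := (agentsIn_sf φ0 hφ0A _ hψ).1
          have hb := hB _ hψ h hm hw
          rw [Beq', truth_iffF, truth_orF,
            ← cstit_iff_dstit_or_box M i hi (.atm (pA φ)) w0 h] at hb
          have h2 : truth M (.cstit i (.atm (pA φ))) w0 h ↔
              truth M (.cstit i φ) w0 h := by
            simp only [truth]
            constructor
            · rintro H h' ⟨Q, hQ, hhQ, hh'Q⟩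
              obtain ⟨hm', hw'⟩ := M.choice_hist i hi w0 Q hQ h' hh'Q
              exact (ih hφm h' hm' hw').2 (H h' ⟨Q, hQ, hhQ, hh'Q⟩)
            · rintro H h' ⟨Q, hQ, hhQ, hh'Q⟩
              obtain ⟨hm', hw'⟩ := M.choice_hist i hi w0 Q hQ h' hh'Q
              exact (ih hφm h' hm' hw').1 (H h' ⟨Q, hQ, hhQ, hh'Q⟩)
          exact h2.symm.trans hb.symm
      | dstit i φ ih =>
          intro hψ
          exact absurd (noDstit_sf φ0 hφ0 _ hψ) (by simp [NoDstit])
      | box φ ih =>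
          intro hψ h hm hw
          have hφm : φ ∈ sf φ0 := mem_sf_box hψ
          have hb := hB _ hψ h hm hw
          rw [Beq', truth_iffF] at hb
          have h2 : truth M (.box (.atm (pA φ))) w0 h ↔ truth M (.box φ) w0 h := by
            simp only [truth]
            constructor
            · intro H h' hm' hw'
              exact (ih hφm h' hm' hw').2 (H h' hm' hw')
            · intro H h' hm' hw'
              exact (ih hφm h' hm' hw').1 (H h' hm' hw')
          exact h2.symm.trans hb.symm
    exact ⟨M, w0, h0, hmax, hw0,
      (main φ0 (sf_self φ0) h0 hmax hw0).2 htr1⟩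

end STIT
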